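/- Let q = r·s with gcd(r, s) = 1, and let s̄ and r̄ denote inverses of s mod r and r mod s respectively. Then S(a, b; q) = S(a·s̄, b·s̄; r) · S(a·r̄, b·r̄; s), where S(a, b; m) := Σ'_{n=1}^{m} e((a·n² + b·n̄³)/m), the sum running over n coprime to m with n̄ the inverse of n mod m. -/

import Mathlib

/-- Kloosterman-type sum `S(a, b; m) = Σ'_{n=1}^{m} e((a n² + b n̄³)/m)`,
the sum running over `n` coprime to `m`, with `n̄` the inverse of `n` mod `m`. -/
noncomputable def Kl (m : ℕ) (a b : ℤ) : ℂ :=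
  ∑ n ∈ (Finset.Icc 1 m).filter (fun n => Nat.gcd n m = 1),
    Complex.exp (2 * Real.pi * Complex.I *
      (((a * (n : ℤ) ^ 2 + b * ((((n : ZMod m))⁻¹.val : ℤ)) ^ 3 : ℤ) : ℝ) / m))

noncomputable def psi (m : ℕ) (x : ℤ) : ℂ :=
  Complex.exp (2 * Real.pi * Complex.I * ((x : ℝ) / m))

lemma psi_congr (m : ℕ) {x y : ℤ} (h : (m : ℤ) ∣ x - y) : psi m x = psi m y := by
  rcases eq_or_ne m 0 with rfl | hm
  · have hxy : x = y := by
      have := zero_dvd_iff.mp (by exact_mod_cast h)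
      linarith
    rw [hxy]
  · obtain ⟨k, hk⟩ := h
    have hx : x = y + m * k := by linarith
    subst hx
    unfold psi
    have hm' : (m : ℂ) ≠ 0 := Nat.cast_ne_zero.2 hm
    have key : (2 * Real.pi * Complex.I * ((((y + (m:ℤ) * k : ℤ)) : ℝ) / m) : ℂ)
        = 2 * Real.pi * Complex.I * ((((y:ℤ)) : ℝ) / m) + k * (2 * Real.pi * Complex.I) := by
      push_cast
      field_simp
    rw [key, Complex.exp_add, Complex.exp_int_mul_two_pi_mul_I, mul_one]

lemma psi_add (m : ℕ) (x y : ℤ) : psi m (x + y) = psi m x * psi m y := by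
  unfold psi
  rw [← Complex.exp_add]
  congr 1
  push_cast
  ring

lemma psi_mul_right (r s : ℕ) (hs : s ≠ 0) (x : ℤ) : psi (r * s) (x * s) = psi r x := by
  unfold psi
  congr 2
  push_cast
  rcases eq_or_ne r 0 with rfl | hr
  · norm_num
  · have hs' : (s : ℂ) ≠ 0 := Nat.cast_ne_zero.2 hs
    rw [mul_div_mul_right _ _ hs']

lemma Kl_eq_units (m : ℕ) [NeZero m] (a b : ℤ) :
    Kl m a b = ∑ u : (ZMod m)ˣ,
      psi m (a * (((u : ZMod m).val : ℤ)) ^ 2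
        + b * ((((u⁻¹ : (ZMod m)ˣ) : ZMod m).val : ℤ)) ^ 3) := by
  have hKl : Kl m a b = ∑ n ∈ (Finset.Icc 1 m).filter (fun n => Nat.gcd n m = 1),
      psi m (a * (n : ℤ) ^ 2 + b * ((((n : ZMod m))⁻¹.val : ℤ)) ^ 3) := rfl
  rw [hKl]
  refine Finset.sum_bij' (fun n hn => ZMod.unitOfCoprime n
      (by simpa using (Finset.mem_filter.mp hn).2))
    (fun u _ => if m = 1 then 1 else (u : ZMod m).val) ?_ ?_ ?_ ?_ ?_
  · intro n hn; exact Finset.mem_univ _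
  · intro u _
    rcases eq_or_ne m 1 with rfl | hm1
    · simp
    · haveI : Fact (1 < m) := ⟨by have := Nat.pos_of_ne_zero (NeZero.ne m); omega⟩
      simp only [if_neg hm1, Finset.mem_filter, Finset.mem_Icc]
      have h1 : (u : ZMod m).val < m := ZMod.val_lt _
      have h2 : (u : ZMod m).val ≠ 0 := by
        intro h0
        have hz : (u : ZMod m) = 0 := by
          have := ZMod.natCast_zmod_val (u : ZMod m)
          rw [h0] at this
          simpa using this.symm
        exact u.ne_zero hz
      exact ⟨⟨Nat.one_le_iff_ne_zero.mpr h2, h1.le⟩, ZMod.val_coe_unit_coprime u⟩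
  · intro n hn
    rcases eq_or_ne m 1 with rfl | hm1
    · have h1 := (Finset.mem_filter.mp hn).1
      simp only [Finset.mem_Icc] at h1
      simp only [if_true, reduceIte]
      omega
    · simp only [if_neg hm1]
      have h1 := (Finset.mem_filter.mp hn).1
      have h2 := (Finset.mem_filter.mp hn).2
      simp only [Finset.mem_Icc] at h1
      have hne : n ≠ m := by
        rintro rfl
        exact hm1 (by simpa [Nat.gcd_self] using h2)
      have hlt : n < m := lt_of_le_of_ne h1.2 hne
      simp only [ZMod.coe_unitOfCoprime]
      rw [ZMod.val_natCast_of_lt hlt]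
  · intro u _
    apply Units.ext
    rcases eq_or_ne m 1 with rfl | hm1
    · exact Subsingleton.elim _ _
    · simp only [if_neg hm1, ZMod.coe_unitOfCoprime]
      exact ZMod.natCast_zmod_val _
  · intro n hn
    have hcop : Nat.Coprime n m := by simpa using (Finset.mem_filter.mp hn).2
    set u : (ZMod m)ˣ := ZMod.unitOfCoprime n hcop with hu
    have hcoe : ((u : (ZMod m)ˣ) : ZMod m) = (n : ZMod m) := ZMod.coe_unitOfCoprime n hcop
    have hinv : ((n : ZMod m))⁻¹ = ((u⁻¹ : (ZMod m)ˣ) : ZMod m) := by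
      rw [← hcoe]; exact ZMod.inv_coe_unit u
    rw [hinv]
    apply psi_congr
    have hval : (((u : ZMod m).val : ℤ) : ZMod m) = ((n : ℤ) : ZMod m) := by
      push_cast
      rw [ZMod.natCast_zmod_val, hcoe]
    have hmod : ((u : ZMod m).val : ℤ) ≡ (n : ℤ) [ZMOD (m : ℤ)] :=
      (ZMod.intCast_eq_intCast_iff _ _ _).mp hval
    have := ((hmod.pow 2).mul_left a).add_right
      (b * ((((u⁻¹ : (ZMod m)ˣ) : ZMod m).val : ℤ)) ^ 3)
    exact this.dvd

lemma psi_split (r s : ℕ) (hr : 0 < r) (hs : 0 < s) (hrs : Nat.Coprime r s)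
    (sbar rbar : ℤ) (hsbar : (r : ℤ) ∣ s * sbar - 1) (hrbar : (s : ℤ) ∣ r * rbar - 1)
    (c : ℤ) : psi (r * s) c = psi r (c * sbar) * psi s (c * rbar) := by
  have hdvd : ((r * s : ℕ) : ℤ) ∣ (s * sbar + r * rbar - 1) := by
    have h1 : (r : ℤ) ∣ (s * sbar + r * rbar - 1) := by
      have : (s * sbar + r * rbar - 1 : ℤ) = (s * sbar - 1) + r * rbar := by ring
      rw [this]
      exact dvd_add hsbar ⟨rbar, rfl⟩
    have h2 : (s : ℤ) ∣ (s * sbar + r * rbar - 1) := by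
      have : (s * sbar + r * rbar - 1 : ℤ) = (r * rbar - 1) + s * sbar := by ring
      rw [this]
      exact dvd_add hrbar ⟨sbar, rfl⟩
    push_cast
    exact (Nat.isCoprime_iff_coprime.mpr hrs).mul_dvd h1 h2
  have h1 : psi (r * s) c = psi (r * s) (c * sbar * s + c * rbar * r) := by
    apply psi_congr
    obtain ⟨k, hk⟩ := hdvd
    refine ⟨-c * k, ?_⟩
    have : c - (c * sbar * s + c * rbar * r) = -(c * (s * sbar + r * rbar - 1)) := by ring
    rw [this, hk]
    ring
  rw [h1, psi_add, psi_mul_right r s hs.ne']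
  congr 1
  rw [mul_comm r s]
  exact psi_mul_right s r hr.ne' _

theorem Kl_multiplicative (q r s : ℕ) (hr : 0 < r) (hs : 0 < s) (hq : q = r * s)
    (hrs : Nat.gcd r s = 1) (a b sbar rbar : ℤ)
    (hsbar : (r : ℤ) ∣ s * sbar - 1) (hrbar : (s : ℤ) ∣ r * rbar - 1) :
    Kl q a b = Kl r (a * sbar) (b * sbar) * Kl s (a * rbar) (b * rbar) := by
  subst hq
  haveI : NeZero r := ⟨hr.ne'⟩
  haveI : NeZero s := ⟨hs.ne'⟩
  haveI : NeZero (r * s) := ⟨by positivity⟩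
  have hcop : Nat.Coprime r s := hrs
  rw [Kl_eq_units (r * s), Kl_eq_units r, Kl_eq_units s]
  set e1 : ZMod (r * s) ≃+* ZMod r × ZMod s := ZMod.chineseRemainder hcop with he1
  set eu : (ZMod (r * s))ˣ ≃* (ZMod r)ˣ × (ZMod s)ˣ :=
    (Units.mapEquiv e1.toMulEquiv).trans MulEquiv.prodUnits with heu
  rw [← Equiv.sum_comp eu.symm.toEquiv (fun u : (ZMod (r * s))ˣ =>
    psi (r * s) (a * (((u : ZMod (r * s)).val : ℤ)) ^ 2
      + b * ((((u⁻¹ : (ZMod (r * s))ˣ) : ZMod (r * s)).val : ℤ)) ^ 3))]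
  rw [Fintype.sum_prod_type, Finset.sum_mul_sum]
  refine Finset.sum_congr rfl fun x _ => Finset.sum_congr rfl fun y _ => ?_
  set u : (ZMod (r * s))ˣ := eu.symm (x, y) with hu
  have hcoe : ((u : (ZMod (r * s))ˣ) : ZMod (r * s))
      = e1.symm ((x : ZMod r), (y : ZMod s)) := rfl
  have h1 : e1 ((u : (ZMod (r * s))ˣ) : ZMod (r * s)) = ((x : ZMod r), (y : ZMod s)) := by
    rw [hcoe]; exact e1.apply_symm_apply _
  have hcoe' : ((u⁻¹ : (ZMod (r * s))ˣ) : ZMod (r * s))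
      = e1.symm (((x⁻¹ : (ZMod r)ˣ) : ZMod r), ((y⁻¹ : (ZMod s)ˣ) : ZMod s)) := by
    have : u⁻¹ = eu.symm (x⁻¹, y⁻¹) := by rw [hu, ← map_inv]; rfl
    rw [this]; rfl
  have h2 : e1 ((u⁻¹ : (ZMod (r * s))ˣ) : ZMod (r * s))
      = (((x⁻¹ : (ZMod r)ˣ) : ZMod r), ((y⁻¹ : (ZMod s)ˣ) : ZMod s)) := by
    rw [hcoe']; exact e1.apply_symm_apply _
  -- integer congruences
  have key : ∀ (z : ZMod (r * s)) (xr : ZMod r) (ys : ZMod s), e1 z = (xr, ys) →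
      ((z.val : ℤ) ≡ (xr.val : ℤ) [ZMOD (r : ℤ)]) ∧ ((z.val : ℤ) ≡ (ys.val : ℤ) [ZMOD (s : ℤ)]) := by
    intro z xr ys hz
    have hz' : e1 ((z.val : ℕ) : ZMod (r * s)) = (xr, ys) := by
      rw [ZMod.natCast_zmod_val]; exact hz
    rw [map_natCast e1] at hz'
    have hfst : ((z.val : ℕ) : ZMod r) = xr := by
      have := congrArg Prod.fst hz'; simpa using this
    have hsnd : ((z.val : ℕ) : ZMod s) = ys := by
      have := congrArg Prod.snd hz'; simpa using this
    constructor
    · apply (ZMod.intCast_eq_intCast_iff _ _ _).mp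
      push_cast
      rw [hfst, ZMod.natCast_zmod_val]
    · apply (ZMod.intCast_eq_intCast_iff _ _ _).mp
      push_cast
      rw [hsnd, ZMod.natCast_zmod_val]
  obtain ⟨hnr, hns⟩ := key _ _ _ h1
  obtain ⟨hwr, hws⟩ := key _ _ _ h2
  rw [psi_split r s hr hs hcop sbar rbar hsbar hrbar]
  congr 1
  · have e2 : a * sbar * (((x : ZMod r).val : ℤ)) ^ 2
        + b * sbar * ((((x⁻¹ : (ZMod r)ˣ) : ZMod r).val : ℤ)) ^ 3
        = (a * (((x : ZMod r).val : ℤ)) ^ 2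
          + b * ((((x⁻¹ : (ZMod r)ˣ) : ZMod r).val : ℤ)) ^ 3) * sbar := by ring
    rw [e2]
    refine psi_congr r ?_
    have m1 := (((hnr.pow 2).mul_left a).add ((hwr.pow 3).mul_left b)).mul_right sbar
    exact m1.symm.dvd
  · have e2 : a * rbar * (((y : ZMod s).val : ℤ)) ^ 2
        + b * rbar * ((((y⁻¹ : (ZMod s)ˣ) : ZMod s).val : ℤ)) ^ 3
        = (a * (((y : ZMod s).val : ℤ)) ^ 2
          + b * ((((y⁻¹ : (ZMod s)ˣ) : ZMod s).val : ℤ)) ^ 3) * rbar := by ring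
    rw [e2]
    refine psi_congr s ?_
    have m1 := (((hns.pow 2).mul_left a).add ((hws.pow 3).mul_left b)).mul_right rbar
    exact m1.symm.dvd
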